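/- Let $C \subseteq \mathbb{R}^d$ be compact with at least one bounded gap. Then $\tau_\varepsilon(C) \to \tau(C)$ as $\varepsilon \to 0^+$. -/

import Mathlib

open Set
open scoped ENNReal Classical

noncomputable section

/-- `ℝ^d` with the Euclidean metric. -/
abbrev Euc (d : ℕ) := EuclideanSpace ℝ (Fin d)

/-- `G` is a gap of `C`: an (open) path-connected component of the complement of `C`. -/
def IsGap {d : ℕ} (C G : Set (Euc d)) : Prop :=
  ∃ x ∈ Cᶜ, G = {y | JoinedIn Cᶜ x y}

/-- The bounded gaps of `C`. -/
def boundedGaps {d : ℕ} (C : Set (Euc d)) : Set (Set (Euc d)) :=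
  {G | IsGap C G ∧ Bornology.IsBounded G}

/-- The union of all unbounded gaps of `C` (for `d = 1` this is the union of the two
unbounded intervals; for `d ≥ 2` it is the single unbounded component). -/
def unboundedGapsUnion {d : ℕ} (C : Set (Euc d)) : Set (Euc d) :=
  ⋃₀ {G | IsGap C G ∧ ¬ Bornology.IsBounded G}

/-- Distance between two sets, as an extended nonnegative real. -/
def setEDist {d : ℕ} (s t : Set (Euc d)) : ℝ≥0∞ :=
  ⨅ x ∈ s, EMetric.infEdist x t

/-- The Falconer–Yavicoli thickness `τ(C)` of a set `C ⊆ ℝ^d`: the infimum, over all bounded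
gaps `G`, of the distance from `G` to the union of all other gaps of diameter at least
`diam G` together with the unbounded gap, divided by `diam G`.  (For bounded gaps enumerated
with non-increasing diameters this agrees with the definition
`⨅ n, dist (Gₙ, G₁ ∪ ⋯ ∪ Gₙ₋₁ ∪ E) / diam Gₙ`.)  If `C` has no bounded gap, `τ(C)` is `∞`
when `C` has non-empty interior and `0` otherwise. -/
def thickness {d : ℕ} (C : Set (Euc d)) : ℝ≥0∞ :=
  if (boundedGaps C).Nonempty then
    ⨅ G ∈ boundedGaps C,
      setEDist G
        ((⋃₀ {G' | G' ∈ boundedGaps C ∧ G' ≠ G ∧ EMetric.diam G ≤ EMetric.diam G'})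
          ∪ unboundedGapsUnion C) / EMetric.diam G
  else if (interior C).Nonempty then ⊤ else 0

/-- The `ε`-thickness `τ_ε(C)`: infimum over bounded gaps `G` and boundary points `u` of `G`
of `dist (u, ⋃_{G' ∈ H_{ε,G}} G' ∪ E) / diam G`, where `H_{ε,G}` consists of the gaps
`G' ≠ G` with `(1-ε) diam G < diam G'`. -/
def epsThickness {d : ℕ} (ε : ℝ) (C : Set (Euc d)) : ℝ≥0∞ :=
  ⨅ G ∈ boundedGaps C, ⨅ u ∈ frontier G,
    EMetric.infEdist u
      ((⋃₀ {G' | G' ∈ boundedGaps C ∧ G' ≠ G ∧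
          ENNReal.ofReal (1 - ε) * EMetric.diam G < EMetric.diam G'})
        ∪ unboundedGapsUnion C) / EMetric.diam G

/-- The point of `ℝ^{2d}` whose first `d` coordinates are those of `y` and whose last `d`
coordinates are those of `z`. -/
def pairPoint {d : ℕ} (y z : Euc d) : Euc (2 * d) :=
  WithLp.toLp 2 (fun i => if h : (i : ℕ) < d then y ⟨(i : ℕ), h⟩
           else z ⟨(i : ℕ) - d, by have := i.isLt; omega⟩)

/-- The product `C₁ × C₂ ⊆ ℝ^{2d}` of two subsets of `ℝ^d`. -/
def setProd {d : ℕ} (C₁ C₂ : Set (Euc d)) : Set (Euc (2 * d)) :=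
  {p | ∃ y ∈ C₁, ∃ z ∈ C₂, p = pairPoint y z}

/-- The pinned distance set `Δ_x(A) = {|x - y| : y ∈ A}`. -/
def pinnedDist {m : ℕ} (x : Euc m) (A : Set (Euc m)) : Set ℝ :=
  (fun y => dist x y) '' A

/-- The index `i` of `{1, …, d}` viewed inside `{1, …, 2d}` (first block). -/
def lo {d : ℕ} (i : Fin d) : Fin (2 * d) := ⟨(i : ℕ), by have := i.isLt; omega⟩

/-- The index `i + d` of `{1, …, 2d}` (second block). -/
def hi {d : ℕ} (i : Fin d) : Fin (2 * d) := ⟨(i : ℕ) + d, by have := i.isLt; omega⟩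

/-- The map `g_{x,t} : ℝ^d → ℝ^d`, `g_{x,t}(y)_i = x_{i+d} + √(t²/d - (x_i - y_i)²)`. -/
def gMap {d : ℕ} (x : Euc (2 * d)) (t : ℝ) (y : Euc d) : Euc d :=
  WithLp.toLp 2 (fun i => x (hi i) + Real.sqrt (t ^ 2 / (d : ℝ) - (x (lo i) - y i) ^ 2))

/-- `u` is a right endpoint of the gap `H`: a boundary point of `H` such that
`u + (ε, …, ε) ∉ H` for every `ε > 0`. -/
def IsRightEndpoint {d : ℕ} (H : Set (Euc d)) (u : Euc d) : Prop :=
  u ∈ frontier H ∧ ∀ ε > (0 : ℝ), ((WithLp.toLp 2 (fun i => u i + ε) : Euc d)) ∉ H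

/-- A closed axis-parallel rectangle (box) in `ℝ^d`. -/
def IsClosedBox {d : ℕ} (R : Set (Euc d)) : Prop :=
  ∃ a b : Fin d → ℝ, R = {y : Euc d | ∀ i, y i ∈ Set.Icc (a i) (b i)}

section Helpers

open Filter EMetric

variable {d : ℕ}

/-- The union of the "big" gaps relative to `G` together with the unbounded gaps. -/
abbrev bigU (C G : Set (Euc d)) : Set (Euc d) :=
  (⋃₀ {G' | G' ∈ boundedGaps C ∧ G' ≠ G ∧ EMetric.diam G ≤ EMetric.diam G'})
    ∪ unboundedGapsUnion C

/-- The union of the gaps in `H_{ε,G}` together with the unbounded gaps. -/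
abbrev epsU (ε : ℝ) (C G : Set (Euc d)) : Set (Euc d) :=
  (⋃₀ {G' | G' ∈ boundedGaps C ∧ G' ≠ G ∧
      ENNReal.ofReal (1 - ε) * EMetric.diam G < EMetric.diam G'})
    ∪ unboundedGapsUnion C

lemma thickness_eq (C : Set (Euc d)) (hgap : (boundedGaps C).Nonempty) :
    thickness C = ⨅ G ∈ boundedGaps C, setEDist G (bigU C G) / EMetric.diam G := by
  have h : thickness C = if (boundedGaps C).Nonempty then
      (⨅ G ∈ boundedGaps C, setEDist G (bigU C G) / EMetric.diam G)
      else if (interior C).Nonempty then ⊤ else 0 := rfl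
  rw [h, if_pos hgap]

lemma epsThickness_eq (ε : ℝ) (C : Set (Euc d)) :
    epsThickness ε C = ⨅ G ∈ boundedGaps C, ⨅ u ∈ frontier G,
      EMetric.infEdist u (epsU ε C G) / EMetric.diam G := rfl

lemma setEDist_le_infEdist {s t : Set (Euc d)} {x : Euc d} (hx : x ∈ s) :
    setEDist s t ≤ EMetric.infEdist x t := iInf₂_le x hx

lemma le_setEDist {s t : Set (Euc d)} {c : ℝ≥0∞}
    (h : ∀ x ∈ s, ∀ y ∈ t, c ≤ edist x y) : c ≤ setEDist s t :=
  le_iInf₂ fun x hx => le_infEdist.mpr (h x hx)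

lemma setEDist_comm (s t : Set (Euc d)) : setEDist s t = setEDist t s := by
  apply le_antisymm <;>
  · refine le_setEDist fun x hx y hy => ?_
    rw [edist_comm]
    exact (setEDist_le_infEdist hy).trans (infEdist_le_edist_of_mem hx)

lemma setEDist_anti {s t t' : Set (Euc d)} (h : t ⊆ t') : setEDist s t' ≤ setEDist s t :=
  iInf₂_mono fun x _ => infEdist_anti h

lemma setEDist_le_infEdist_of_mem_closure {s t : Set (Euc d)} {x : Euc d}
    (hx : x ∈ closure s) : setEDist s t ≤ EMetric.infEdist x t := by
  have hne : (nhdsWithin x s).NeBot := mem_closure_iff_nhdsWithin_neBot.mp hx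
  have htd : Filter.Tendsto (fun y => EMetric.infEdist y t) (nhdsWithin x s)
      (nhds (EMetric.infEdist x t)) :=
    (continuous_infEdist.tendsto x).mono_left nhdsWithin_le_nhds
  refine ge_of_tendsto htd ?_
  filter_upwards [self_mem_nhdsWithin] with y hy using setEDist_le_infEdist hy

lemma iInf_div_const {ι : Sort*} (f : ι → ℝ≥0∞) {c : ℝ≥0∞} (h0 : c ≠ 0) (ht : c ≠ ⊤) :
    (⨅ i, f i) / c = ⨅ i, f i / c := by
  refine le_antisymm (le_iInf fun i => ENNReal.div_le_div_right (iInf_le f i) c) ?_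
  rw [ENNReal.le_div_iff_mul_le (Or.inl h0) (Or.inl ht)]
  refine le_iInf fun i => ?_
  calc (⨅ j, f j / c) * c ≤ f i / c * c := mul_le_mul_left (iInf_le _ i) c
    _ = f i := ENNReal.div_mul_cancel h0 ht

lemma biInf_div_const {α : Type*} (S : Set α) (f : α → ℝ≥0∞) {c : ℝ≥0∞}
    (h0 : c ≠ 0) (ht : c ≠ ⊤) :
    (⨅ x ∈ S, f x) / c = ⨅ x ∈ S, f x / c := by
  rw [iInf_div_const _ h0 ht]
  exact iInf_congr fun x => iInf_div_const _ h0 ht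

lemma IsGap.nonempty {C G : Set (Euc d)} (h : IsGap C G) : G.Nonempty := by
  obtain ⟨x, hx, rfl⟩ := h
  exact ⟨x, JoinedIn.refl hx⟩

lemma IsGap.isOpen {C G : Set (Euc d)} (hC : IsCompact C) (h : IsGap C G) : IsOpen G := by
  obtain ⟨x, hx, rfl⟩ := h
  exact (hC.isClosed.isOpen_compl).pathComponentIn x

lemma IsGap.eq_or_disjoint {C G G' : Set (Euc d)} (h : IsGap C G) (h' : IsGap C G') :
    G = G' ∨ Disjoint G G' := by
  obtain ⟨x, hx, rfl⟩ := h
  obtain ⟨x', hx', rfl⟩ := h'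
  by_cases hd : Disjoint {y | JoinedIn Cᶜ x y} {y | JoinedIn Cᶜ x' y}
  · exact Or.inr hd
  · left
    obtain ⟨z, hz, hz'⟩ := Set.not_disjoint_iff.mp hd
    have e1 : pathComponentIn Cᶜ z = pathComponentIn Cᶜ x := pathComponentIn_congr hz
    have e2 : pathComponentIn Cᶜ z = pathComponentIn Cᶜ x' := pathComponentIn_congr hz'
    show pathComponentIn Cᶜ x = pathComponentIn Cᶜ x'
    exact e1.symm.trans e2

lemma notMem_gapsUnion {C G : Set (Euc d)} (hG : G ∈ boundedGaps C)
    (P : Set (Euc d) → Prop) {t : Euc d}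
    (ht : t ∈ (⋃₀ {G' | G' ∈ boundedGaps C ∧ G' ≠ G ∧ P G'}) ∪ unboundedGapsUnion C) :
    t ∉ G := by
  rcases ht with ht | ht
  · obtain ⟨G', ⟨hG'bg, hne, -⟩, htG'⟩ := ht
    have hd := (hG'bg.1.eq_or_disjoint hG.1).resolve_left hne
    exact fun hmem => (Set.disjoint_left.mp hd htG') hmem
  · obtain ⟨G', ⟨hG'gap, hG'unb⟩, htG'⟩ := ht
    have hne : G' ≠ G := fun h => hG'unb (h ▸ hG.2)
    have hd := (hG'gap.eq_or_disjoint hG.1).resolve_left hne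
    exact fun hmem => (Set.disjoint_left.mp hd htG') hmem

lemma diam_pos_of_isOpen [Nontrivial (Euc d)] {G : Set (Euc d)} (hG : IsOpen G)
    (hne : G.Nonempty) : 0 < EMetric.diam G := by
  obtain ⟨x, hx⟩ := hne
  haveI : Filter.NeBot (nhdsWithin x {x}ᶜ) := Module.punctured_nhds_neBot ℝ _ x
  obtain ⟨y, hyG, hyx⟩ := (dense_compl_singleton x).inter_open_nonempty G hG ⟨x, hx⟩
  calc (0 : ℝ≥0∞) < edist y x := by
        rw [edist_pos]
        simpa using hyx
    _ ≤ EMetric.diam G := edist_le_diam_of_mem hyG hx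

lemma bigU_subset_epsU [Nontrivial (Euc d)] {C G : Set (Euc d)} (hC : IsCompact C)
    (hG : G ∈ boundedGaps C) {ε : ℝ} (hε : 0 < ε) : bigU C G ⊆ epsU ε C G := by
  refine Set.union_subset_union_left _ (Set.sUnion_mono ?_)
  rintro G' ⟨h1, h2, h3⟩
  refine ⟨h1, h2, ?_⟩
  have hd0 : EMetric.diam G ≠ 0 := (diam_pos_of_isOpen (hG.1.isOpen hC) hG.1.nonempty).ne'
  have hdT : EMetric.diam G ≠ ⊤ := hG.2.ediam_ne_top
  calc ENNReal.ofReal (1 - ε) * EMetric.diam G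
      < 1 * EMetric.diam G := by
        refine ENNReal.mul_lt_mul_left hd0 hdT ?_
        exact ENNReal.ofReal_lt_one.mpr (by linarith)
    _ = EMetric.diam G := one_mul _
    _ ≤ EMetric.diam G' := h3

lemma exists_frontier_edist_le {G : Set (Euc d)} (hG : IsOpen G) {x t : Euc d}
    (hx : x ∈ G) (ht : t ∉ G) : ∃ u ∈ frontier G, edist u t ≤ edist x t := by
  set f : ℝ → Euc d := fun θ => x + θ • (t - x) with hf
  have hfc : Continuous f := by fun_prop
  set K : Set ℝ := Icc (0 : ℝ) 1 ∩ f ⁻¹' Gᶜ with hK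
  have hKcl : IsClosed K := isClosed_Icc.inter (hG.isClosed_compl.preimage hfc)
  have hf1 : f 1 = t := by simp [hf]
  have hf0 : f 0 = x := by simp [hf]
  have h1K : (1 : ℝ) ∈ K := ⟨⟨zero_le_one, le_refl 1⟩, by rw [Set.mem_preimage, hf1]; exact ht⟩
  have hKne : K.Nonempty := ⟨1, h1K⟩
  have hKbdd : BddBelow K := ⟨0, fun θ hθ => hθ.1.1⟩
  set θ₀ := sInf K with hθ₀def
  have hθ₀K : θ₀ ∈ K := hKcl.csInf_mem hKne hKbdd
  have hθ₀pos : 0 < θ₀ := by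
    rcases (hθ₀K.1.1).lt_or_eq with h | h
    · exact h
    · exfalso
      apply hθ₀K.2
      show f θ₀ ∈ G
      rw [← h, hf0]
      exact hx
  have hmemcl : f θ₀ ∈ closure G := by
    have htend : Tendsto f (nhdsWithin θ₀ (Iio θ₀)) (nhds (f θ₀)) :=
      (hfc.tendsto θ₀).mono_left nhdsWithin_le_nhds
    have hev : ∀ᶠ θ in nhdsWithin θ₀ (Iio θ₀), f θ ∈ G := by
      filter_upwards [Ico_mem_nhdsLT_of_mem ⟨hθ₀pos, le_refl θ₀⟩] with θ hθ
      by_contra hno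
      have hmem : θ ∈ K := ⟨⟨hθ.1, hθ.2.le.trans hθ₀K.1.2⟩, hno⟩
      exact absurd hmem (notMem_of_lt_csInf hθ.2 hKbdd)
    exact mem_closure_of_tendsto htend hev
  refine ⟨f θ₀, ?_, ?_⟩
  · rw [hG.frontier_eq]
    exact ⟨hmemcl, hθ₀K.2⟩
  · rw [edist_dist, edist_dist]
    apply ENNReal.ofReal_le_ofReal
    have hdiff : f θ₀ - t = (1 - θ₀) • (x - t) := by
      simp only [hf]
      rw [sub_smul, one_smul, smul_sub, smul_sub]
      abel
    calc dist (f θ₀) t = ‖f θ₀ - t‖ := dist_eq_norm _ _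
      _ = ‖(1 - θ₀) • (x - t)‖ := by rw [hdiff]
      _ = |1 - θ₀| * ‖x - t‖ := by rw [norm_smul, Real.norm_eq_abs]
      _ ≤ 1 * ‖x - t‖ := by
          apply mul_le_mul_of_nonneg_right _ (norm_nonneg _)
          rw [abs_of_nonneg (by linarith [hθ₀K.1.2])]
          linarith [hθ₀pos]
      _ = dist x t := by rw [one_mul, dist_eq_norm]

end Helpers

/-- `τ_ε(C) → τ(C)` as `ε → 0⁺`. -/
theorem epsThickness_tendsto_thickness
    {d : ℕ} (C : Set (Euc d)) (hC : IsCompact C) (hgap : (boundedGaps C).Nonempty) :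
    Filter.Tendsto (fun ε : ℝ => epsThickness ε C)
      (nhdsWithin 0 (Set.Ioi 0)) (nhds (thickness C)) := by
  rcases subsingleton_or_nontrivial (Euc d) with hsub | hnt
  · -- degenerate case `d = 0`
    have huniv : ∀ {G : Set (Euc d)}, G.Nonempty → G = univ := by
      intro G hne
      obtain ⟨x, hx⟩ := hne
      refine eq_univ_iff_forall.mpr fun y => ?_
      rwa [Subsingleton.elim y x]
    have h1 : ∀ ε : ℝ, epsThickness ε C = ⊤ := by
      intro ε
      rw [epsThickness_eq, iInf_eq_top]
      intro G
      rw [iInf_eq_top]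
      intro hG
      rw [huniv hG.1.nonempty, frontier_univ]
      exact iInf_emptyset
    have h2 : thickness C = ⊤ := by
      rw [thickness_eq C hgap, iInf_eq_top]
      intro G
      rw [iInf_eq_top]
      intro hG
      have hempty : bigU C G = (∅ : Set (Euc d)) := by
        refine eq_empty_iff_forall_notMem.mpr ?_
        rintro t (⟨G', ⟨hG', hne, -⟩, -⟩ | ⟨G', ⟨hG'gap, hG'unb⟩, -⟩)
        · exact hne ((huniv hG'.1.nonempty).trans (huniv hG.1.nonempty).symm)
        · refine hG'unb (Metric.isBounded_iff_ediam_ne_top.mpr ?_)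
          rw [EMetric.diam_subsingleton (Set.subsingleton_of_subsingleton)]
          simp
      have hsed : setEDist G (bigU C G) = ⊤ := by
        rw [hempty]
        simp [setEDist]
        intro i _
        exact Metric.infEDist_empty
      have hdz : EMetric.diam G = 0 := EMetric.diam_subsingleton (Set.subsingleton_of_subsingleton)
      rw [hsed, hdz,
        ENNReal.div_zero (by simp)]
    have heq : (fun ε : ℝ => epsThickness ε C) = fun _ => thickness C :=
      funext fun ε => (h1 ε).trans h2.symm
    rw [heq, h2]
    exact tendsto_const_nhds
  · -- main case
    have key : ∀ G ∈ boundedGaps C,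
        thickness C * EMetric.diam G ≤ setEDist G (bigU C G) := by
      intro G hG
      have hd0 : EMetric.diam G ≠ 0 := (diam_pos_of_isOpen (hG.1.isOpen hC) hG.1.nonempty).ne'
      have hdT : EMetric.diam G ≠ ⊤ := hG.2.ediam_ne_top
      rw [← ENNReal.le_div_iff_mul_le (Or.inl hd0) (Or.inl hdT), thickness_eq C hgap]
      exact iInf₂_le G hG
    have hA : ∀ ε : ℝ, 0 < ε → epsThickness ε C ≤ thickness C := by
      intro ε hε
      rw [thickness_eq C hgap]
      refine le_iInf₂ fun G hG => ?_
      have hGopen := hG.1.isOpen hC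
      have hd0 : EMetric.diam G ≠ 0 := (diam_pos_of_isOpen hGopen hG.1.nonempty).ne'
      have hdT : EMetric.diam G ≠ ⊤ := hG.2.ediam_ne_top
      have h1 : epsThickness ε C ≤
          ⨅ u ∈ frontier G, EMetric.infEdist u (epsU ε C G) / EMetric.diam G := by
        rw [epsThickness_eq]
        exact iInf₂_le G hG
      refine h1.trans ?_
      rw [show setEDist G (bigU C G) = ⨅ x ∈ G, EMetric.infEdist x (bigU C G) from rfl,
        biInf_div_const _ _ hd0 hdT]
      refine le_iInf₂ fun x hx => ?_
      rw [show EMetric.infEdist x (bigU C G) = ⨅ t ∈ bigU C G, edist x t from rfl,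
        biInf_div_const _ _ hd0 hdT]
      refine le_iInf₂ fun t ht => ?_
      have htG : t ∉ G := notMem_gapsUnion hG _ ht
      obtain ⟨u, hu, hud⟩ := exists_frontier_edist_le hGopen hx htG
      have htε : t ∈ epsU ε C G := bigU_subset_epsU hC hG hε ht
      calc (⨅ u ∈ frontier G, EMetric.infEdist u (epsU ε C G) / EMetric.diam G)
          ≤ EMetric.infEdist u (epsU ε C G) / EMetric.diam G := iInf₂_le u hu
        _ ≤ edist u t / EMetric.diam G :=
            ENNReal.div_le_div_right (EMetric.infEdist_le_edist_of_mem htε) _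
        _ ≤ edist x t / EMetric.diam G := ENNReal.div_le_div_right hud _
    have hB : ∀ ε : ℝ, 0 < ε →
        ENNReal.ofReal (1 - ε) * thickness C ≤ epsThickness ε C := by
      intro ε hε
      rw [epsThickness_eq]
      refine le_iInf₂ fun G hG => le_iInf₂ fun u hu => ?_
      have hd0 : EMetric.diam G ≠ 0 := (diam_pos_of_isOpen (hG.1.isOpen hC) hG.1.nonempty).ne'
      have hdT : EMetric.diam G ≠ ⊤ := hG.2.ediam_ne_top
      rw [ENNReal.le_div_iff_mul_le (Or.inl hd0) (Or.inl hdT)]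
      refine le_trans ?_ (setEDist_le_infEdist_of_mem_closure (frontier_subset_closure hu))
      refine le_setEDist fun x hx t ht => ?_
      have hmain : ∀ t' ∈ bigU C G,
          ENNReal.ofReal (1 - ε) * thickness C * EMetric.diam G ≤ edist x t' := by
        intro t' ht'
        calc ENNReal.ofReal (1 - ε) * thickness C * EMetric.diam G
            ≤ 1 * thickness C * EMetric.diam G := by
              gcongr
              exact ENNReal.ofReal_le_one.mpr (by linarith)
          _ = thickness C * EMetric.diam G := by rw [one_mul]
          _ ≤ setEDist G (bigU C G) := key G hG
          _ ≤ edist x t' := (setEDist_le_infEdist hx).trans (EMetric.infEdist_le_edist_of_mem ht')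
      rcases ht with ht | ht
      · obtain ⟨G', ⟨hG', hne, hdlt⟩, htG'⟩ := ht
        rcases le_or_gt (EMetric.diam G) (EMetric.diam G') with hle | hlt
        · exact hmain t (Set.mem_union_left _ ⟨G', ⟨hG', hne, hle⟩, htG'⟩)
        · have hGmem : G ∈ {G'' | G'' ∈ boundedGaps C ∧ G'' ≠ G' ∧
              EMetric.diam G' ≤ EMetric.diam G''} := ⟨hG, fun h => hne h.symm, hlt.le⟩
          calc ENNReal.ofReal (1 - ε) * thickness C * EMetric.diam G
              = thickness C * (ENNReal.ofReal (1 - ε) * EMetric.diam G) := by ring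
            _ ≤ thickness C * EMetric.diam G' := by gcongr
            _ ≤ setEDist G' (bigU C G') := key G' hG'
            _ ≤ setEDist G' G :=
                setEDist_anti ((subset_sUnion_of_mem hGmem).trans Set.subset_union_left)
            _ = setEDist G G' := setEDist_comm _ _
            _ ≤ edist x t := (setEDist_le_infEdist hx).trans
                (EMetric.infEdist_le_edist_of_mem htG')
      · exact hmain t (Set.mem_union_right _ ht)
    have hlow : Filter.Tendsto (fun ε : ℝ => ENNReal.ofReal (1 - ε) * thickness C)
        (nhdsWithin 0 (Set.Ioi 0)) (nhds (thickness C)) := by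
      have h0 : Filter.Tendsto (fun ε : ℝ => (1 - ε)) (nhdsWithin 0 (Set.Ioi 0)) (nhds 1) := by
        have hc : Continuous (fun ε : ℝ => (1 : ℝ) - ε) := by fun_prop
        have h := (hc.tendsto (0 : ℝ)).mono_left (nhdsWithin_le_nhds (s := Set.Ioi (0 : ℝ)))
        simpa using h
      have h1 : Filter.Tendsto (fun ε : ℝ => ENNReal.ofReal (1 - ε))
          (nhdsWithin 0 (Set.Ioi 0)) (nhds 1) := by
        have h := (ENNReal.continuous_ofReal.tendsto 1).comp h0
        simpa [Function.comp_def] using h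
      have h2 := ENNReal.Tendsto.mul_const (b := thickness C) h1 (Or.inl one_ne_zero)
      simpa using h2
    refine tendsto_of_tendsto_of_tendsto_of_le_of_le' hlow tendsto_const_nhds ?_ ?_
    · filter_upwards [self_mem_nhdsWithin] with ε hε using hB ε hε
    · filter_upwards [self_mem_nhdsWithin] with ε hε using hA ε hε

end
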